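/- There exists a two-agent, three-good instance in which MMS_1 = MMS_2 = 1 and every allocation gives some agent i utility u_i(x_i) ≤ (2/3)·MMS_i. Concretely: both agents value every good at 2/3; good g_1 is indivisible for both agents; good g_2 is indivisible for agent 1 and divisible for agent 2; good g_3 is divisible for agent 1 and indivisible for agent 2. Hence for two agents the worst-case MMS approximation guarantee is at most 2/3. -/

import Mathlib

open scoped BigOperators Classical

/-- An instance of fair division with subjective divisibility: `n` agents and `m` goods,
each good of total amount 1.  Each agent `i` assigns a nonnegative value `v i g` to each
good `g` and regards each good as either divisible or indivisible for her. -/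
structure FairDivision (n m : ℕ) where
  /-- agent `i`'s value for good `g` -/
  v : Fin n → Fin m → ℝ
  v_nonneg : ∀ i g, 0 ≤ v i g
  /-- `divisible i g` means agent `i` regards good `g` as divisible -/
  divisible : Fin n → Fin m → Prop

namespace FairDivision

variable {n m : ℕ}

/-- Agent `i`'s utility from receiving fraction `t ∈ [0,1]` of good `g`:
`t * v i g` if `g` is divisible for `i`; `v i g` if `g` is indivisible for `i` and `t = 1`;
and `0` if `g` is indivisible for `i` and `t < 1`. -/
noncomputable def frUtil (I : FairDivision n m) (i : Fin n) (g : Fin m) (t : ℝ) : ℝ :=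
  if I.divisible i g then t * I.v i g else if t = 1 then I.v i g else 0

/-- Agent `i`'s (additive) utility for a bundle `b`, given by the fraction `b g` of each good. -/
noncomputable def util (I : FairDivision n m) (i : Fin n) (b : Fin m → ℝ) : ℝ :=
  ∑ g, I.frUtil i g (b g)

/-- Agent `i`'s utility for the bundle `b` with good `g` omitted. -/
noncomputable def utilMinus (I : FairDivision n m) (i : Fin n) (b : Fin m → ℝ) (g : Fin m) : ℝ :=
  ∑ g' ∈ Finset.univ.erase g, I.frUtil i g' (b g')

/-- A complete allocation: fractions in `[0,1]` summing to `1` for every good. -/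
def IsAllocation (I : FairDivision n m) (x : Fin n → Fin m → ℝ) : Prop :=
  (∀ i g, 0 ≤ x i g ∧ x i g ≤ 1) ∧ ∀ g, ∑ i, x i g = 1

/-- A partial allocation: fractions in `[0,1]` summing to at most `1` for every good. -/
def IsPartialAllocation (I : FairDivision n m) (x : Fin n → Fin m → ℝ) : Prop :=
  (∀ i g, 0 ≤ x i g ∧ x i g ≤ 1) ∧ ∀ g, ∑ i, x i g ≤ 1

/-- The maximin share of agent `i`: the supremum, over all fractional `n`-partitions
`P` of the goods, of the minimum over the parts `P j` of agent `i`'s utility. -/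
noncomputable def MMS (I : FairDivision n m) (i : Fin n) : ℝ :=
  sSup { r : ℝ | ∃ P : Fin n → Fin m → ℝ, I.IsAllocation P ∧ r = ⨅ j, I.util i (P j) }

/-- Non-wastefulness: every positive fraction an agent receives yields her positive utility. -/
def NonWasteful (I : FairDivision n m) (x : Fin n → Fin m → ℝ) : Prop :=
  ∀ i g, 0 < x i g → 0 < I.frUtil i g (x i g)

/-- Envy-freeness. -/
def EF (I : FairDivision n m) (x : Fin n → Fin m → ℝ) : Prop :=
  ∀ i j, I.util i (x j) ≤ I.util i (x i)

/-- Envy-freeness for mixed goods: for all agents `i, j`, if every good `j` receives a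
positive fraction of is indivisible for `i`, then `i` does not envy `j` after removing some
such good from `j`'s bundle; otherwise `i` does not envy `j`. -/
def EFM (I : FairDivision n m) (x : Fin n → Fin m → ℝ) : Prop :=
  ∀ i j,
    ((∀ g, 0 < x j g → ¬ I.divisible i g) →
      ∃ g, 0 < x j g ∧ I.utilMinus i (x j) g ≤ I.util i (x i)) ∧
    ((¬ ∀ g, 0 < x j g → ¬ I.divisible i g) → I.util i (x j) ≤ I.util i (x i))

/-- EFXM: as EFM, but the envy must vanish after removing any positively valued such good. -/
def EFXM (I : FairDivision n m) (x : Fin n → Fin m → ℝ) : Prop :=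
  ∀ i j,
    ((∀ g, 0 < x j g → ¬ I.divisible i g) →
      ∀ g, 0 < x j g → 0 < I.v i g → I.utilMinus i (x j) g ≤ I.util i (x i)) ∧
    ((¬ ∀ g, 0 < x j g → ¬ I.divisible i g) → I.util i (x j) ≤ I.util i (x i))

/-- EF1M: if `j`'s bundle contains (a positive fraction of) some good that `i` regards as
indivisible and values positively, the envy of `i` must vanish after removing some such good;
otherwise `i` does not envy `j`. -/
def EF1M (I : FairDivision n m) (x : Fin n → Fin m → ℝ) : Prop :=
  ∀ i j,
    ((∃ g, 0 < x j g ∧ ¬ I.divisible i g ∧ 0 < I.v i g) →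
      ∃ g, 0 < x j g ∧ ¬ I.divisible i g ∧ 0 < I.v i g ∧
        I.utilMinus i (x j) g ≤ I.util i (x i)) ∧
    ((¬ ∃ g, 0 < x j g ∧ ¬ I.divisible i g ∧ 0 < I.v i g) → I.util i (x j) ≤ I.util i (x i))

/-- Pareto optimality (among complete allocations). -/
def ParetoOptimal (I : FairDivision n m) (x : Fin n → Fin m → ℝ) : Prop :=
  ¬ ∃ y, I.IsAllocation y ∧ (∀ i, I.util i (x i) ≤ I.util i (y i)) ∧
    ∃ i, I.util i (x i) < I.util i (y i)

/-- In a 3-agent instance, `B` (a set of whole goods) is a reducible bundle with respect to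
agent `i`: `u_i(B) ≥ (2/3)·MMS_i`, `u_j(M∖B) ≥ 2·MMS_j` for some agent `j ≠ i`, and
`u_k(M∖B) ≥ (4/3)·MMS_k` for the remaining agent `k`. -/
def IsReducible (I : FairDivision 3 m) (B : Finset (Fin m)) (i : Fin 3) : Prop :=
  2 / 3 * I.MMS i ≤ ∑ g ∈ B, I.v i g ∧
    ∃ j, j ≠ i ∧ 2 * I.MMS j ≤ ∑ g ∈ Bᶜ, I.v j g ∧
      ∀ k, k ≠ i → k ≠ j → 4 / 3 * I.MMS k ≤ ∑ g ∈ Bᶜ, I.v k g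

end FairDivision

/-- There exists a two-agent, three-good instance (both agents value every good
at 2/3; `g_1` indivisible for both; `g_2` indivisible for agent 1 and divisible for agent 2;
`g_3` divisible for agent 1 and indivisible for agent 2) in which `MMS_1 = MMS_2 = 1` and
every allocation gives some agent `i` utility at most `(2/3) * MMS_i`. -/
noncomputable def Inst : FairDivision 2 3 where
  v := fun _ _ => 2 / 3
  v_nonneg := by norm_num
  divisible := fun i g => (i = 0 ∧ g = 2) ∨ (i = 1 ∧ g = 1)

lemma Inst_divisible (i : Fin 2) (g : Fin 3) :
    Inst.divisible i g ↔ (i = 0 ∧ g = 2) ∨ (i = 1 ∧ g = 1) := Iff.rfl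

lemma Inst_frUtil_pos (i : Fin 2) (g : Fin 3) (t : ℝ)
    (hd : (i = 0 ∧ g = 2) ∨ (i = 1 ∧ g = 1)) :
    Inst.frUtil i g t = t * (2 / 3) := by
  unfold FairDivision.frUtil
  rw [if_pos ((Inst_divisible i g).mpr hd)]
  rfl

lemma Inst_frUtil_neg (i : Fin 2) (g : Fin 3) (t : ℝ)
    (hd : ¬ ((i = 0 ∧ g = 2) ∨ (i = 1 ∧ g = 1))) :
    Inst.frUtil i g t = if t = 1 then 2 / 3 else 0 := by
  unfold FairDivision.frUtil
  rw [if_neg (fun hc => hd ((Inst_divisible i g).mp hc))]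
  split_ifs <;> rfl

lemma Inst_frUtil (i : Fin 2) (g : Fin 3) (t : ℝ) :
    Inst.frUtil i g t =
      if (i = 0 ∧ g = 2) ∨ (i = 1 ∧ g = 1) then t * (2 / 3)
      else if t = 1 then 2 / 3 else 0 := by
  by_cases hd : (i = 0 ∧ g = 2) ∨ (i = 1 ∧ g = 1)
  · rw [if_pos hd, Inst_frUtil_pos i g t hd]
  · rw [if_neg hd, Inst_frUtil_neg i g t hd]

lemma Inst_frUtil_le (i : Fin 2) (g : Fin 3) (t : ℝ) (h0 : 0 ≤ t) (h1 : t ≤ 1) :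
    Inst.frUtil i g t ≤ 2 / 3 * t := by
  rw [Inst_frUtil]
  split_ifs <;> linarith

lemma Inst_util (i : Fin 2) (b : Fin 3 → ℝ) :
    Inst.util i b = Inst.frUtil i 0 (b 0) + Inst.frUtil i 1 (b 1) + Inst.frUtil i 2 (b 2) := by
  simp [FairDivision.util, Fin.sum_univ_three]

lemma Inst_mms (i : Fin 2) : Inst.MMS i = 1 := by
  have hub : ∀ r ∈ { r : ℝ | ∃ P : Fin 2 → Fin 3 → ℝ,
      Inst.IsAllocation P ∧ r = ⨅ j, Inst.util i (P j) }, r ≤ 1 := by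
    rintro r ⟨P, ⟨hPb, hPs⟩, rfl⟩
    have hsum : Inst.util i (P 0) + Inst.util i (P 1) ≤ 2 := by
      have hb : ∀ j g, Inst.frUtil i g (P j g) ≤ 2 / 3 * P j g := fun j g =>
        Inst_frUtil_le i g _ (hPb j g).1 (hPb j g).2
      have hs : ∀ g : Fin 3, P 0 g + P 1 g = 1 := fun g => by
        have := hPs g; rwa [Fin.sum_univ_two] at this
      have h0 := hs 0; have h1 := hs 1; have h2 := hs 2
      rw [Inst_util, Inst_util]
      have := hb 0 0; have := hb 0 1; have := hb 0 2
      have := hb 1 0; have := hb 1 1; have := hb 1 2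
      linarith
    have hbdd : BddBelow (Set.range fun j => Inst.util i (P j)) :=
      (Set.finite_range _).bddBelow
    rcases le_or_gt (Inst.util i (P 0)) 1 with h | h
    · exact (ciInf_le hbdd 0).trans h
    · exact (ciInf_le hbdd 1).trans (by linarith)
  have hmem : (1 : ℝ) ∈ { r : ℝ | ∃ P : Fin 2 → Fin 3 → ℝ,
      Inst.IsAllocation P ∧ r = ⨅ j, Inst.util i (P j) } := by
    refine ⟨if i = 0 then ![![1, 0, 1/2], ![0, 1, 1/2]] else ![![1, 1/2, 0], ![0, 1/2, 1]],
      ?_, ?_⟩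
    · constructor
      · intro j g; fin_cases i <;> fin_cases j <;> fin_cases g <;> norm_num
      · intro g; fin_cases i <;> fin_cases g <;> norm_num [Fin.sum_univ_two]
    · have : (fun j => Inst.util i
          ((if i = 0 then ![![1, 0, 1/2], ![0, 1, 1/2]] else ![![1, 1/2, 0], ![0, 1/2, 1]]) j))
          = fun _ => (1 : ℝ) := by
        funext j
        fin_cases i <;> fin_cases j <;>
          norm_num [Inst_util, Inst_frUtil, Matrix.cons_val_two, Matrix.tail_cons, Matrix.head_cons, Fin.reduceEq]
      rw [this, ciInf_const]
  exact le_antisymm (csSup_le ⟨1, hmem⟩ hub) (le_csSup ⟨1, hub⟩ hmem)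

theorem two_agent_mms_at_most_two_thirds :
    ∃ I : FairDivision 2 3,
      (∀ i g, I.v i g = 2 / 3) ∧
      (∀ i g, I.divisible i g ↔ (i = 0 ∧ g = 2) ∨ (i = 1 ∧ g = 1)) ∧
      (∀ i, I.MMS i = 1) ∧
      (∀ x, I.IsAllocation x → ∃ i, I.util i (x i) ≤ 2 / 3 * I.MMS i) := by
  refine ⟨Inst, fun i g => rfl, fun i g => Iff.rfl, Inst_mms, ?_⟩
  intro x hx
  by_contra h
  push_neg at h
  have h0 := h 0
  have h1 := h 1
  rw [Inst_mms, Inst_util, Inst_frUtil_neg 0 0 _ (by decide),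
    Inst_frUtil_neg 0 1 _ (by decide), Inst_frUtil_pos 0 2 _ (by decide)] at h0
  rw [Inst_mms, Inst_util, Inst_frUtil_neg 1 0 _ (by decide),
    Inst_frUtil_pos 1 1 _ (by decide), Inst_frUtil_neg 1 2 _ (by decide)] at h1
  norm_num at h0 h1
  have b00 := hx.1 0 0; have b01 := hx.1 0 1; have b02 := hx.1 0 2
  have b10 := hx.1 1 0; have b11 := hx.1 1 1; have b12 := hx.1 1 2
  have s0 := hx.2 0; have s1 := hx.2 1; have s2 := hx.2 2
  rw [Fin.sum_univ_two] at s0 s1 s2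
  split_ifs at h0 h1 <;>
    linarith [b00.1, b00.2, b01.1, b01.2, b02.1, b02.2, b10.1, b10.2, b11.1, b11.2,
      b12.1, b12.2]
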